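/- Let z ~ N(0,1), φ the density of N(0,σ²) with σ sufficiently large, and 0 ≤ r ≤ 10 log σ. Define G(z) = ∫₀^{rz}(rz−y)²φ(y) dy and H(z) = (z²−1)G(z). Then E[|H(z)|] ≤ C·polylog(σ)/σ for an absolute constant C. -/

import Mathlib

open MeasureTheory ProbabilityTheory Real intervalIntegral

lemma aux_int_pow (n : ℕ) : Integrable (fun x : ℝ => x ^ n * Real.exp (-(1/2) * x ^ 2)) := by
  have h := integrable_rpow_mul_exp_neg_mul_sq (by norm_num : (0:ℝ) < 1/2)
    (show (-1:ℝ) < (n:ℝ) by exact_mod_cast neg_one_lt_zero.trans_le (Nat.cast_nonneg n))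
  refine h.congr (Filter.Eventually.of_forall fun x => ?_)
  simp only []
  rw [Real.rpow_natCast]

lemma aux_int_poly :
    Integrable (fun z : ℝ => z ^ 6 + z ^ 4 + z ^ 2 + 1) (gaussianReal 0 1) := by
  rw [gaussianReal_of_var_ne_zero _ one_ne_zero, integrable_withDensity_iff
    (measurable_gaussianPDF 0 1) (Filter.Eventually.of_forall fun x => ENNReal.ofReal_lt_top)]
  have key : Integrable (fun x : ℝ =>
      (√(2 * π))⁻¹ * (x ^ 6 * Real.exp (-(1/2) * x ^ 2) + (x ^ 4 * Real.exp (-(1/2) * x ^ 2)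
        + (x ^ 2 * Real.exp (-(1/2) * x ^ 2) + x ^ 0 * Real.exp (-(1/2) * x ^ 2))))) :=
    (((aux_int_pow 6).add ((aux_int_pow 4).add ((aux_int_pow 2).add (aux_int_pow 0)))).const_mul _)
  refine key.congr (Filter.Eventually.of_forall fun x => ?_)
  simp only [gaussianPDF_def, ENNReal.toReal_ofReal (gaussianPDFReal_nonneg 0 1 x)]
  simp only [gaussianPDFReal]
  have h1 : -(x - 0) ^ 2 / (2 * ((1:NNReal):ℝ)) = -(1/2) * x ^ 2 := by
    push_cast; ring
  rw [h1]
  have h2 : (2 * π * ((1:NNReal):ℝ)) = 2 * π := by push_cast; ring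
  rw [h2]; ring

theorem stmt5 :
    ∃ (C σ₀ : ℝ) (p : ℕ), 0 < C ∧ 0 < σ₀ ∧
      ∀ (σ r : ℝ), σ₀ ≤ σ → 0 ≤ r → r ≤ 10 * Real.log σ →
      ∀ (φ G H : ℝ → ℝ),
        (∀ x, φ x = (1 / (σ * Real.sqrt (2 * π))) * Real.exp (-(x ^ 2) / (2 * σ ^ 2))) →
        (∀ z : ℝ, G z = ∫ y in (0 : ℝ)..(r * z), (r * z - y) ^ 2 * φ y) →
        (∀ z : ℝ, H z = (z ^ 2 - 1) * G z) →
        ∫ z, |H z| ∂(gaussianReal 0 1) ≤ C * (Real.log σ) ^ p / σ := by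
  set γ := gaussianReal 0 1
  set M : ℝ := ∫ z, (z ^ 6 + z ^ 4 + z ^ 2 + 1) ∂γ with hM
  have hM0 : 0 ≤ M := integral_nonneg fun z => by positivity
  refine ⟨1000 * (M + 1), 1, 3, by positivity, one_pos, ?_⟩
  intro σ r hσ hr hr10 φ G H hφ hG hH
  have hσ0 : (0:ℝ) < σ := lt_of_lt_of_le one_pos hσ
  have hlog : 0 ≤ Real.log σ := Real.log_nonneg hσ
  -- pointwise bound on φ
  have hφ_le : ∀ x, φ x ≤ 1 / σ := by
    intro x
    rw [hφ]
    have h1 : Real.exp (-(x ^ 2) / (2 * σ ^ 2)) ≤ 1 := by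
      apply Real.exp_le_one_iff.mpr
      apply div_nonpos_of_nonpos_of_nonneg (neg_nonpos.mpr (sq_nonneg x))
      positivity
    have h2 : (1:ℝ) ≤ Real.sqrt (2 * π) := by
      rw [show (1:ℝ) = Real.sqrt 1 by simp]
      apply Real.sqrt_le_sqrt
      nlinarith [Real.pi_gt_three]
    calc (1 / (σ * Real.sqrt (2 * π))) * Real.exp (-(x ^ 2) / (2 * σ ^ 2))
        ≤ (1 / (σ * Real.sqrt (2 * π))) * 1 := by
          apply mul_le_mul_of_nonneg_left h1; positivity
      _ ≤ 1 / σ := by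
          rw [mul_one]
          apply div_le_div_of_nonneg_left one_pos.le hσ0
          nlinarith
  have hφ_nonneg : ∀ x, 0 ≤ φ x := by
    intro x; rw [hφ]; positivity
  -- pointwise bound on |H|
  have hHbound : ∀ z, |H z| ≤ (r ^ 3 / σ) * (z ^ 6 + z ^ 4 + z ^ 2 + 1) := by
    intro z
    have hGbound : |G z| ≤ (r * z) ^ 2 * (1 / σ) * |r * z| := by
      rw [hG]
      have := intervalIntegral.norm_integral_le_of_norm_le_const
        (f := fun y => (r * z - y) ^ 2 * φ y) (a := (0:ℝ)) (b := r * z)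
        (C := (r * z) ^ 2 * (1 / σ)) ?_
      · simpa [Real.norm_eq_abs] using this
      · intro y hy
        rw [Set.mem_uIoc] at hy
        rw [Real.norm_eq_abs, abs_mul, abs_of_nonneg (hφ_nonneg y)]
        have hsq : |(r * z - y) ^ 2| ≤ (r * z) ^ 2 := by
          rw [abs_of_nonneg (sq_nonneg _)]
          rcases hy with ⟨h1, h2⟩ | ⟨h1, h2⟩ <;> nlinarith
        exact mul_le_mul hsq (hφ_le y) (hφ_nonneg y) (by positivity)
    rw [hH, abs_mul]
    have h1 : |z ^ 2 - 1| ≤ z ^ 2 + 1 := by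
      rw [abs_le]; constructor <;> nlinarith
    calc |z ^ 2 - 1| * |G z| ≤ (z ^ 2 + 1) * ((r * z) ^ 2 * (1 / σ) * |r * z|) := by
          apply mul_le_mul h1 hGbound (abs_nonneg _) (by positivity)
      _ ≤ (r ^ 3 / σ) * (z ^ 6 + z ^ 4 + z ^ 2 + 1) := by
          rw [abs_mul, abs_of_nonneg hr]
          have haz : 0 ≤ |z| := abs_nonneg z
          have hz2 : z ^ 2 = |z| ^ 2 := (sq_abs z).symm
          have hz4 : z ^ 4 = |z| ^ 4 := by
            rw [show (4:ℕ) = 2 * 2 from rfl, pow_mul, pow_mul, sq_abs]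
          have hz6 : z ^ 6 = |z| ^ 6 := by
            rw [show (6:ℕ) = 2 * 3 from rfl, pow_mul, pow_mul, sq_abs]
          have key : (z ^ 2 + 1) * |z| ^ 3 ≤ z ^ 6 + z ^ 4 + z ^ 2 + 1 := by
            rw [hz2, hz4, hz6]
            nlinarith [mul_nonneg (pow_nonneg haz 4) (sq_nonneg (|z| - 1)),
              mul_nonneg (pow_nonneg haz 2) (sq_nonneg (|z| - 1)),
              pow_nonneg haz 6, pow_nonneg haz 2]
          have h2 : (z ^ 2 + 1) * ((r * z) ^ 2 * (1 / σ) * (r * |z|))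
              = (r ^ 3 / σ) * ((z ^ 2 + 1) * |z| ^ 3) := by
            have hrz : (r * z) ^ 2 = r ^ 2 * |z| ^ 2 := by rw [mul_pow, sq_abs]
            rw [hrz, hz2]
            field_simp
          rw [h2]
          apply mul_le_mul_of_nonneg_left key (by positivity)
  -- integrability of the bound
  have hint : Integrable (fun z => (r ^ 3 / σ) * (z ^ 6 + z ^ 4 + z ^ 2 + 1)) γ :=
    aux_int_poly.const_mul _
  calc ∫ z, |H z| ∂γ ≤ ∫ z, (r ^ 3 / σ) * (z ^ 6 + z ^ 4 + z ^ 2 + 1) ∂γ := by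
        apply integral_mono_of_nonneg
          (Filter.Eventually.of_forall fun z => abs_nonneg _) hint
          (Filter.Eventually.of_forall hHbound)
    _ = (r ^ 3 / σ) * M := MeasureTheory.integral_const_mul _ _
    _ ≤ (1000 * (Real.log σ) ^ 3 / σ) * (M + 1) := by
        apply mul_le_mul _ (by linarith) hM0 (by positivity)
        rw [div_le_div_iff_of_pos_right hσ0]
        calc r ^ 3 ≤ (10 * Real.log σ) ^ 3 := by
              apply pow_le_pow_left₀ hr hr10
          _ = 1000 * (Real.log σ) ^ 3 := by ring
    _ = 1000 * (M + 1) * (Real.log σ) ^ 3 / σ := by ring
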